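/- Let q : ℝ² → 𝕋² be the quotient map onto the flat two-dimensional torus and let (α,β) ∈ ℝ² be nonzero. If the image q({t·(α,β) : t ∈ ℝ}) of the line through the origin with direction (α,β) is a closed subset of 𝕋², then the line ℝ·(α,β) contains a nonzero point of ℤ²; that is, there exist a nonzero (p,k) ∈ ℤ² and s ∈ ℝ with (p,k) = s·(α,β). -/

import Mathlib

noncomputable section

/-- The integer lattice `ℤ^N` inside Euclidean space `ℝ^N`. -/
abbrev torusLattice (N : ℕ) : AddSubgroup (EuclideanSpace ℝ (Fin N)) :=
  (Submodule.span ℤ (Set.range ((EuclideanSpace.basisFun (Fin N) ℝ).toBasis))).toAddSubgroup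

instance (N : ℕ) : IsClosed ((torusLattice N : Set (EuclideanSpace ℝ (Fin N)))) :=
  AddSubgroup.isClosed_of_discrete

/-- The flat torus `𝕋^N = ℝ^N / ℤ^N`, equipped with the quotient metric. -/
abbrev Torus (N : ℕ) := EuclideanSpace ℝ (Fin N) ⧸ torusLattice N

/-- The canonical quotient map `ℝ^N → 𝕋^N`. -/
abbrev torusQuot (N : ℕ) : EuclideanSpace ℝ (Fin N) → Torus N := QuotientAddGroup.mk

/-- Membership in the integer lattice in `ℝ²` means integer coordinates. -/
lemma mem_torusLattice_two (w : EuclideanSpace ℝ (Fin 2)) :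
    w ∈ torusLattice 2 ↔ ∃ p k : ℤ, w 0 = p ∧ w 1 = k := by
  rw [show (w ∈ torusLattice 2) = (w ∈ Submodule.span ℤ
    (Set.range ((EuclideanSpace.basisFun (Fin 2) ℝ).toBasis))) from rfl,
    Module.Basis.mem_span_iff_repr_mem]
  simp only [Fin.forall_fin_two]
  have h0 : ∀ i, ((EuclideanSpace.basisFun (Fin 2) ℝ).toBasis.repr w) i = w i := by
    intro i; simp
  rw [h0, h0]
  simp [algebraMap, eq_comm]

/-- Let `(α, β) ∈ ℝ²` be nonzero. If the image in the flat torus `𝕋²` of the line through the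
origin with direction `(α, β)` is closed, then that line contains a nonzero integer point:
there exist a nonzero `(p, k) ∈ ℤ²` and `s ∈ ℝ` with `(p, k) = s • (α, β)`. -/
theorem closed_line_image_contains_integer_point
    (α β : ℝ) (hαβ : (α, β) ≠ (0, 0))
    (v : EuclideanSpace ℝ (Fin 2))
    (hv : v = (WithLp.equiv 2 (Fin 2 → ℝ)).symm ![α, β])
    (hclosed : IsClosed (torusQuot 2 '' (Set.range fun t : ℝ => t • v))) :
    ∃ (p k : ℤ) (s : ℝ), (p, k) ≠ (0, 0) ∧
      (WithLp.equiv 2 (Fin 2 → ℝ)).symm ![(p : ℝ), (k : ℝ)] = s • v := by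
  classical
  have hv0 : v 0 = α := by subst hv; simp
  have hv1 : v 1 = β := by subst hv; simp
  have hor : α ≠ 0 ∨ β ≠ 0 := by
    by_contra h
    push_neg at h
    exact hαβ (by rw [h.1, h.2])
  -- the continuous linear functional with kernel the line ℝ • v
  set f : EuclideanSpace ℝ (Fin 2) →L[ℝ] ℝ :=
    β • EuclideanSpace.proj (0 : Fin 2) - α • EuclideanSpace.proj (1 : Fin 2) with hfdef
  have hfx : ∀ x : EuclideanSpace ℝ (Fin 2), f x = β * x 0 - α * x 1 := by
    intro x; simp [hfdef]
  have hker : ∀ x : EuclideanSpace ℝ (Fin 2), f x = 0 ↔ ∃ t : ℝ, x = t • v := by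
    intro x
    constructor
    · intro hx
      rw [hfx] at hx
      rcases hor with hα | hβ
      · refine ⟨x 0 / α, ?_⟩
        ext i
        fin_cases i
        · simp [hv0, div_mul_cancel₀ _ hα]
        · have : x 1 = x 0 * β / α := by
            field_simp
            linarith
          simp [hv1, this]; ring
      · refine ⟨x 1 / β, ?_⟩
        ext i
        fin_cases i
        · have : x 0 = x 1 * α / β := by
            field_simp
            linarith
          simp [hv0, this]; ring
        · simp [hv1, div_mul_cancel₀ _ hβ]
    · rintro ⟨t, rfl⟩
      rw [hfx]
      simp [hv0, hv1]
      ring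
  -- the subgroup of values of f on the lattice
  set S : AddSubgroup ℝ :=
    { carrier := {x : ℝ | ∃ p k : ℤ, x = p * β - k * α}
      add_mem' := by
        rintro a b ⟨p, k, rfl⟩ ⟨p', k', rfl⟩
        exact ⟨p + p', k + k', by push_cast; ring⟩
      zero_mem' := ⟨0, 0, by simp⟩
      neg_mem' := by
        rintro a ⟨p, k, rfl⟩
        exact ⟨-p, -k, by push_cast; ring⟩ } with hSdef
  have hSmem : ∀ x : ℝ, x ∈ S ↔ ∃ p k : ℤ, x = p * β - k * α := fun x => Iff.rfl
  -- the preimage of the image of the line is f ⁻¹' S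
  have hTS : torusQuot 2 ⁻¹' (torusQuot 2 '' (Set.range fun t : ℝ => t • v))
      = f ⁻¹' (S : Set ℝ) := by
    ext x
    simp only [Set.mem_preimage, Set.mem_image, Set.mem_range]
    constructor
    · rintro ⟨y, ⟨t, rfl⟩, hy⟩
      have hmem : x - t • v ∈ torusLattice 2 :=
        (QuotientAddGroup.eq_iff_sub_mem).1 hy.symm
      rcases (mem_torusLattice_two _).1 hmem with ⟨p, k, h0, h1⟩
      have hx0 : x 0 = t * v 0 + p := by
        have := h0; simp [PiLp.sub_apply, PiLp.smul_apply, smul_eq_mul] at this; linarith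
      have hx1 : x 1 = t * v 1 + k := by
        have := h1; simp [PiLp.sub_apply, PiLp.smul_apply, smul_eq_mul] at this; linarith
      refine (hSmem _).2 ⟨p, k, ?_⟩
      rw [hfx, hx0, hx1, hv0, hv1]; ring
    · intro hx
      rcases (hSmem _).1 hx with ⟨p, k, hpk⟩
      set w : EuclideanSpace ℝ (Fin 2) := (WithLp.equiv 2 (Fin 2 → ℝ)).symm ![(p : ℝ), (k : ℝ)]
        with hwdef
      have hw0 : w 0 = (p : ℝ) := by simp [hwdef]
      have hw1 : w 1 = (k : ℝ) := by simp [hwdef]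
      have hfw : f (x - w) = 0 := by
        rw [hfx]
        simp only [PiLp.sub_apply, hw0, hw1]
        rw [hfx] at hpk
        linarith [hpk]
      rcases (hker _).1 hfw with ⟨t, ht⟩
      refine ⟨t • v, ⟨t, rfl⟩, ?_⟩
      refine ((QuotientAddGroup.eq_iff_sub_mem).2 ?_).symm
      have : x - t • v = w := by
        have := ht
        rw [sub_eq_iff_eq_add] at this
        rw [this]; abel
      rw [this]
      exact (mem_torusLattice_two _).2 ⟨p, k, hw0, hw1⟩
  have hTclosed : IsClosed (f ⁻¹' (S : Set ℝ)) := by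
    rw [← hTS]
    exact hclosed.preimage continuous_quot_mk
  -- the auxiliary vector w₀ with f w₀ = α² + β² > 0
  set w₀ : EuclideanSpace ℝ (Fin 2) := (WithLp.equiv 2 (Fin 2 → ℝ)).symm ![β, -α] with hw₀def
  have hfw₀ : f w₀ = β ^ 2 + α ^ 2 := by
    rw [hfx]
    have h0 : w₀ 0 = β := by simp [hw₀def]
    have h1 : w₀ 1 = -α := by simp [hw₀def]
    rw [h0, h1]; ring
  have hpos : (0 : ℝ) < β ^ 2 + α ^ 2 := by
    rcases hor with h | h
    · positivity
    · positivity
  rcases S.dense_or_cyclic with hdense | ⟨a, ha⟩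
  · -- dense case: contradiction with closedness
    exfalso
    have hw₀ne : w₀ ≠ 0 := by
      intro h
      rw [h] at hfw₀
      simp at hfw₀
      linarith
    have hTdense : Dense (f ⁻¹' (S : Set ℝ)) := by
      intro x
      rw [Metric.mem_closure_iff]
      intro ε hε
      have hfx' : f x ∈ closure (S : Set ℝ) := hdense _
      rw [Metric.mem_closure_iff] at hfx'
      have hnorm : (0 : ℝ) < ‖w₀‖ := norm_pos_iff.2 hw₀ne
      obtain ⟨s, hsS, hs⟩ := hfx' (ε * (β ^ 2 + α ^ 2) / ‖w₀‖)
        (div_pos (mul_pos hε hpos) hnorm)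
      refine ⟨x + ((s - f x) / (β ^ 2 + α ^ 2)) • w₀, ?_, ?_⟩
      · show f _ ∈ (S : Set ℝ)
        have : f (x + ((s - f x) / (β ^ 2 + α ^ 2)) • w₀) = s := by
          rw [map_add, map_smul, hfw₀, smul_eq_mul]
          field_simp
          ring
        rw [this]; exact hsS
      · rw [dist_eq_norm]
        have : x - (x + ((s - f x) / (β ^ 2 + α ^ 2)) • w₀)
            = -(((s - f x) / (β ^ 2 + α ^ 2)) • w₀) := by abel
        rw [this, norm_neg, norm_smul]
        have hdist : |f x - s| < ε * (β ^ 2 + α ^ 2) / ‖w₀‖ := by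
          rw [← Real.dist_eq]; exact hs
        rw [Real.norm_eq_abs, abs_div, abs_of_pos hpos]
        rw [div_mul_eq_mul_div, div_lt_iff₀ hpos]
        have : |s - f x| = |f x - s| := abs_sub_comm _ _
        rw [this]
        calc |f x - s| * ‖w₀‖ < (ε * (β ^ 2 + α ^ 2) / ‖w₀‖) * ‖w₀‖ := by
              exact mul_lt_mul_of_pos_right hdist hnorm
          _ = ε * (β ^ 2 + α ^ 2) := by field_simp
    have hTuniv : f ⁻¹' (S : Set ℝ) = Set.univ := by
      rw [← hTclosed.closure_eq, hTdense.closure_eq]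
    -- then S = ℝ, but S is countable
    have hSuniv : ∀ r : ℝ, r ∈ (S : Set ℝ) := by
      intro r
      have hx : (r / (β ^ 2 + α ^ 2)) • w₀ ∈ f ⁻¹' (S : Set ℝ) := by
        rw [hTuniv]; trivial
      have : f ((r / (β ^ 2 + α ^ 2)) • w₀) = r := by
        rw [map_smul, hfw₀, smul_eq_mul]
        field_simp
      rwa [Set.mem_preimage, this] at hx
    have hScount : Set.Countable (S : Set ℝ) := by
      have : (S : Set ℝ) ⊆ Set.range (fun pk : ℤ × ℤ => (pk.1 : ℝ) * β - pk.2 * α) := by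
        rintro x ⟨p, k, rfl⟩
        exact ⟨(p, k), rfl⟩
      exact (Set.countable_range _).mono this
    have : Set.Countable (Set.univ : Set ℝ) := by
      refine hScount.mono ?_
      intro x _
      exact hSuniv x
    exact Cardinal.not_countable_real this
  · -- cyclic case: produce the integer point
    have hβS : β ∈ S := (hSmem _).2 ⟨1, 0, by push_cast; ring⟩
    have hαS : α ∈ S := (hSmem _).2 ⟨0, -1, by push_cast; ring⟩
    rw [ha, AddSubgroup.mem_closure_singleton] at hβS hαS
    obtain ⟨m, hm⟩ := hβS
    obtain ⟨n, hn⟩ := hαS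
    rw [zsmul_eq_mul] at hm hn
    have hne : (n, m) ≠ ((0 : ℤ), (0 : ℤ)) := by
      intro h
      have hn0 : n = 0 := (Prod.mk.injEq _ _ _ _ ▸ h).1
      have hm0 : m = 0 := (Prod.mk.injEq _ _ _ _ ▸ h).2
      apply hαβ
      rw [← hn, ← hm, hn0, hm0]
      norm_num
    have hrel : (n : ℝ) * β = (m : ℝ) * α := by
      rw [← hm, ← hn]; ring
    rcases eq_or_ne α 0 with hα | hα
    · -- α = 0, so β ≠ 0 and n = 0
      have hβ : β ≠ 0 := by
        intro h; exact hαβ (by rw [hα, h])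
      have hn0 : (n : ℝ) = 0 := by
        have : (n : ℝ) * β = 0 := by rw [hrel, hα]; ring
        rcases mul_eq_zero.1 this with h | h
        · exact h
        · exact absurd h hβ
      refine ⟨n, m, (m : ℝ) / β, hne, ?_⟩
      ext i
      fin_cases i
      · simp [hv0, hα, hn0]
      · simp [hv1, div_mul_cancel₀ _ hβ]
    · refine ⟨n, m, (n : ℝ) / α, hne, ?_⟩
      ext i
      fin_cases i
      · simp [hv0, div_mul_cancel₀ _ hα]
      · have : (m : ℝ) = n * β / α := by
          field_simp
          linarith [hrel]
        simp [hv1, this]; ring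

end
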